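/- arXiv:1602.04270 — 6 statements merged into one kernel-verified Lean document; each statement's English description precedes it below -/
import Mathlib

section
/- Let a, b, c : Fin m → Bool be binary strings with c(s) ∈ {a(s), b(s)} for every site s (the child haplotype c is Mendelian consistent with parent haplotypes a, b). Call σ : Fin m → Fin 2 a valid origin sequence if c(s) = a(s) whenever σ(s) = 1 and c(s) = b(s) whenever σ(s) = 2. Let t_1 < t_2 < ... < t_r be the sites where a(t) ≠ b(t) (the parent's heterozygous sites), and for each j let f(j) ∈ {1,2} be the unique origin forced at t_j (f(j)=1 if c(t_j)=a(t_j), else f(j)=2). Then the minimum over all valid origin sequences σ of the number of s with σ(s) ≠ σ(s+1) equals the number of indices j ∈ {1,...,r−1} with f(j) ≠ f(j+1). -/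
/-- `σ` is a valid origin sequence for inheriting child haplotype `c` from parent
haplotypes `(a, b)`: origin `0` means the allele comes from `a`, origin `1` from `b`. -/
def IsValidOrigin {n : ℕ} (a b c : Fin (n + 1) → Bool) (σ : Fin (n + 1) → Fin 2) : Prop :=
  ∀ s, (σ s = 0 → c s = a s) ∧ (σ s = 1 → c s = b s)

/-- Number of recombinations in the origin sequence `σ`. -/
def nRecomb {n : ℕ} (σ : Fin (n + 1) → Fin 2) : ℕ :=
  (Finset.univ.filter fun j : Fin n => σ j.castSucc ≠ σ j.succ).card

namespace Stmt3Aux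

variable {n : ℕ}

/-- the forced origin at a site -/
def forced (a c : Fin (n + 1) → Bool) (s : Fin (n + 1)) : Fin 2 :=
  if c s = a s then 0 else 1

/-- heterozygous sites up to `s` -/
def Eset (a b : Fin (n + 1) → Bool) (s : Fin (n + 1)) : Finset (Fin (n + 1)) :=
  Finset.univ.filter fun t => a t ≠ b t ∧ t ≤ s

/-- all heterozygous sites -/
def Hset (a b : Fin (n + 1) → Bool) : Finset (Fin (n + 1)) :=
  Finset.univ.filter fun t => a t ≠ b t

/-- the optimal origin sequence: take the forced origin at the latest heterozygous site
at or before `s`, else at the first heterozygous site, else `0`. -/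
noncomputable def sigmaStar (a b c : Fin (n + 1) → Bool) (s : Fin (n + 1)) : Fin 2 :=
  if h : (Eset a b s).Nonempty then forced a c ((Eset a b s).max' h)
  else if h2 : (Hset a b).Nonempty then forced a c ((Hset a b).min' h2) else 0

/-- the set of pairs of consecutive heterozygous sites with differing forced origin -/
def pairs (a b c : Fin (n + 1) → Bool) : Finset (Fin (n + 1) × Fin (n + 1)) :=
  Finset.univ.filter fun pq : Fin (n + 1) × Fin (n + 1) =>
        pq.1 < pq.2 ∧ a pq.1 ≠ b pq.1 ∧ a pq.2 ≠ b pq.2 ∧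
        (∀ u, pq.1 < u → u < pq.2 → a u = b u) ∧
        ¬((c pq.1 = a pq.1) ↔ (c pq.2 = a pq.2))

lemma fin2_cases (x : Fin 2) : x = 0 ∨ x = 1 := by
  match x with
  | 0 => exact Or.inl rfl
  | 1 => exact Or.inr rfl

lemma forced_ne_iff (a c : Fin (n + 1) → Bool) (p q : Fin (n + 1)) :
    forced a c p ≠ forced a c q ↔ ¬((c p = a p) ↔ (c q = a q)) := by
  unfold forced
  by_cases h1 : c p = a p <;> by_cases h2 : c q = a q <;> simp [h1, h2]

lemma valid_het {a b c : Fin (n + 1) → Bool} (hc : ∀ s, c s = a s ∨ c s = b s)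
    {σ : Fin (n + 1) → Fin 2} (hσ : IsValidOrigin a b c σ) {s : Fin (n + 1)}
    (hs : a s ≠ b s) : σ s = forced a c s := by
  by_cases hca : c s = a s
  · rw [forced, if_pos hca]
    rcases fin2_cases (σ s) with h | h
    · exact h
    · exact absurd (hca ▸ (hσ s).2 h) hs
  · rw [forced, if_neg hca]
    rcases fin2_cases (σ s) with h | h
    · exact absurd ((hσ s).1 h) hca
    · exact h

/-- if a site is heterozygous, `sigmaStar` takes the forced value there -/
lemma sigmaStar_het (a b c : Fin (n + 1) → Bool) {s : Fin (n + 1)} (hs : a s ≠ b s) :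
    sigmaStar a b c s = forced a c s := by
  have hmem : s ∈ Eset a b s := by simp [Eset, hs]
  have hne : (Eset a b s).Nonempty := ⟨s, hmem⟩
  have hmax : (Eset a b s).max' hne = s := by
    apply le_antisymm
    · apply Finset.max'_le
      intro t ht
      simp only [Eset, Finset.mem_filter] at ht
      exact ht.2.2
    · exact Finset.le_max' _ _ hmem
  rw [sigmaStar, dif_pos hne, hmax]

lemma sigmaStar_valid {a b c : Fin (n + 1) → Bool} (hc : ∀ s, c s = a s ∨ c s = b s) :
    IsValidOrigin a b c (sigmaStar a b c) := by
  intro s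
  by_cases hs : a s ≠ b s
  · rw [sigmaStar_het a b c hs]
    by_cases hca : c s = a s
    · rw [forced, if_pos hca]
      constructor
      · intro _; exact hca
      · intro h; exact absurd h (by decide)
    · rw [forced, if_neg hca]
      constructor
      · intro h; exact absurd h (by decide)
      · intro _; exact (hc s).resolve_left hca
  · push_neg at hs
    have h1 : c s = a s := by rcases hc s with h | h; exact h; rw [h, hs]
    have h2 : c s = b s := by rw [h1, hs]
    exact ⟨fun _ => h1, fun _ => h2⟩

/-- constancy from no changes -/
lemma no_change_const {α : Type*} (σ : Fin (n + 1) → α) :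
    ∀ k : ℕ, ∀ p q : Fin (n + 1), q.val = p.val + k →
      (∀ j : Fin n, p ≤ j.castSucc → j.succ ≤ q → σ j.castSucc = σ j.succ) → σ p = σ q := by
  intro k
  induction k with
  | zero =>
    intro p q h _
    have : p = q := Fin.ext (by omega)
    rw [this]
  | succ k ih =>
    intro p q h hconst
    have hk : p.val + k < n := by have := q.isLt; omega
    set q' : Fin (n + 1) := ⟨p.val + k, by omega⟩ with hq'
    set j : Fin n := ⟨p.val + k, hk⟩ with hj
    have hcs : j.castSucc = q' := by simp [Fin.ext_iff, hj, hq']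
    have hss : j.succ = q := by simp [Fin.ext_iff, hj]; omega
    have h1 : σ p = σ q' := by
      apply ih p q' rfl
      intro i hpi hiq
      apply hconst i hpi
      refine le_trans hiq ?_
      simp [Fin.le_def, hq']
      omega
    have h2 : σ q' = σ q := by
      rw [← hcs, ← hss]
      apply hconst j
      · simp [Fin.le_def, hj]
      · rw [hss]
    rw [h1, h2]

lemma exists_change {α : Type*} (σ : Fin (n + 1) → α) {p q : Fin (n + 1)}
    (hpq : p ≤ q) (hne : σ p ≠ σ q) :
    ∃ j : Fin n, p ≤ j.castSucc ∧ j.succ ≤ q ∧ σ j.castSucc ≠ σ j.succ := by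
  by_contra hcon
  push_neg at hcon
  exact hne (no_change_const σ (q.val - p.val) p q (by omega) hcon)

lemma mem_pairs {a b c : Fin (n + 1) → Bool} {pq : Fin (n + 1) × Fin (n + 1)}
    (h : pq ∈ pairs a b c) :
    pq.1 < pq.2 ∧ a pq.1 ≠ b pq.1 ∧ a pq.2 ≠ b pq.2 ∧
    (∀ u, pq.1 < u → u < pq.2 → a u = b u) ∧
    forced a c pq.1 ≠ forced a c pq.2 := by
  simp only [pairs, Finset.mem_filter, Finset.mem_univ, true_and] at h
  exact ⟨h.1, h.2.1, h.2.2.1, h.2.2.2.1, (forced_ne_iff a c _ _).2 h.2.2.2.2⟩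

/-- disjointness of intervals of distinct pairs -/
lemma pairs_eq_of_overlap {a b c : Fin (n + 1) → Bool}
    {pq pq' : Fin (n + 1) × Fin (n + 1)} (h : pq ∈ pairs a b c) (h' : pq' ∈ pairs a b c)
    (j : Fin n) (h1 : pq.1 ≤ j.castSucc) (h2 : j.succ ≤ pq.2)
    (h3 : pq'.1 ≤ j.castSucc) (h4 : j.succ ≤ pq'.2) : pq = pq' := by
  obtain ⟨hlt, hp, hq, hmid, -⟩ := mem_pairs h
  obtain ⟨hlt', hp', hq', hmid', -⟩ := mem_pairs h'
  have hP : pq.1 = pq'.1 := by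
    rcases lt_trichotomy pq.1 pq'.1 with hlt2 | heq | hlt2
    · exact absurd (hmid pq'.1 hlt2 (lt_of_le_of_lt h3 (lt_of_lt_of_le (Fin.castSucc_lt_succ : j.castSucc < j.succ) h2))) hp'
    · exact heq
    · exact absurd (hmid' pq.1 hlt2 (lt_of_le_of_lt h1 (lt_of_lt_of_le (Fin.castSucc_lt_succ : j.castSucc < j.succ) h4))) hp
  have hQ : pq.2 = pq'.2 := by
    rcases lt_trichotomy pq.2 pq'.2 with hlt2 | heq | hlt2
    · exact absurd (hmid' pq.2 (lt_of_le_of_lt h3 (lt_of_lt_of_le (Fin.castSucc_lt_succ : j.castSucc < j.succ) h2)) hlt2) hq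
    · exact heq
    · exact absurd (hmid pq'.2 (lt_of_le_of_lt h1 (lt_of_lt_of_le (Fin.castSucc_lt_succ : j.castSucc < j.succ) h4)) hlt2) hq'
  exact Prod.ext hP hQ

/-- lower bound -/
lemma lower_bound {a b c : Fin (n + 1) → Bool} (hc : ∀ s, c s = a s ∨ c s = b s)
    {σ : Fin (n + 1) → Fin 2} (hσ : IsValidOrigin a b c σ) :
    (pairs a b c).card ≤ nRecomb σ := by
  rcases Finset.eq_empty_or_nonempty (pairs a b c) with he | ⟨pq0, hpq0⟩
  · simp [he]
  have hn : 0 < n := by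
    obtain ⟨hlt, -⟩ := mem_pairs hpq0
    have := pq0.2.isLt
    have := Fin.lt_def.1 hlt
    omega
  have key : ∀ pq ∈ pairs a b c,
      ∃ j : Fin n, pq.1 ≤ j.castSucc ∧ j.succ ≤ pq.2 ∧ σ j.castSucc ≠ σ j.succ := by
    intro pq hpq
    obtain ⟨hlt, hp, hq, -, hf⟩ := mem_pairs hpq
    apply exists_change σ (le_of_lt hlt)
    rw [valid_het hc hσ hp, valid_het hc hσ hq]
    exact hf
  classical
  apply Finset.card_le_card_of_injOn
    (fun pq => if h : ∃ j : Fin n, pq.1 ≤ j.castSucc ∧ j.succ ≤ pq.2 ∧ σ j.castSucc ≠ σ j.succ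
               then h.choose else ⟨0, hn⟩)
  · intro pq hpq
    have h := key pq hpq
    simp only [dif_pos h, Finset.mem_filter, Finset.mem_univ, true_and]
    simpa using h.choose_spec.2.2
  · intro pq hpq pq' hpq' heq
    have h := key pq hpq
    have h' := key pq' hpq'
    simp only [dif_pos h, dif_pos h'] at heq
    have s1 := h.choose_spec
    have s2 := h'.choose_spec
    rw [heq] at s1
    exact pairs_eq_of_overlap hpq hpq' h'.choose s1.1 s1.2.1 s2.1 s2.2.1

/-- the previous heterozygous site of a pair: if `pq.1 ≤ s < pq.2`, the latest
heterozygous site at or before `s` is `pq.1` -/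
lemma max'_eq_fst {a b c : Fin (n + 1) → Bool} {pq : Fin (n + 1) × Fin (n + 1)}
    (h : pq ∈ pairs a b c) {s : Fin (n + 1)} (hps : pq.1 ≤ s) (hsq : s < pq.2)
    (hne : (Eset a b s).Nonempty) : (Eset a b s).max' hne = pq.1 := by
  obtain ⟨hlt, hp, hq, hmid, -⟩ := mem_pairs h
  have hmem : pq.1 ∈ Eset a b s := by simp [Eset, hp, hps]
  have hmax : (Eset a b s).max' hne ∈ Eset a b s := Finset.max'_mem _ _
  simp only [Eset, Finset.mem_filter, Finset.mem_univ, true_and] at hmax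
  by_contra hne2
  have hlt2 : pq.1 < (Eset a b s).max' hne :=
    lt_of_le_of_ne (Finset.le_max' _ _ hmem) (Ne.symm hne2)
  exact hmax.1 (hmid _ hlt2 (lt_of_le_of_lt hmax.2 hsq))

/-- upper bound: the number of recombinations of `sigmaStar` -/
lemma sigmaStar_count (a b c : Fin (n + 1) → Bool) :
    nRecomb (sigmaStar a b c) = (pairs a b c).card := by
  classical
  -- key structural facts about a change index
  have hchange : ∀ j : Fin n, sigmaStar a b c j.castSucc ≠ sigmaStar a b c j.succ →
      a j.succ ≠ b j.succ ∧ (Eset a b j.castSucc).Nonempty := by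
    intro j hj
    have hhet : a j.succ ≠ b j.succ := by
      intro hab
      apply hj
      have hE : Eset a b j.castSucc = Eset a b j.succ := by
        ext t
        simp only [Eset, Finset.mem_filter, Finset.mem_univ, true_and]
        constructor
        · rintro ⟨h1, h2⟩
          exact ⟨h1, le_trans h2 (le_of_lt (Fin.castSucc_lt_succ : j.castSucc < j.succ))⟩
        · rintro ⟨h1, h2⟩
          refine ⟨h1, ?_⟩
          have hts : t ≠ j.succ := by rintro rfl; exact h1 hab
          rw [Fin.le_def] at h2 ⊢
          simp only [Fin.coe_castSucc, Fin.val_succ] at *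
          have : t.val ≠ j.val + 1 := by
            intro hv; exact hts (Fin.ext (by simpa using hv))
          omega
      rw [sigmaStar, sigmaStar, hE]
    refine ⟨hhet, ?_⟩
    by_contra hEe
    apply hj
    rw [Finset.not_nonempty_iff_eq_empty] at hEe
    have hHne : (Hset a b).Nonempty := ⟨j.succ, by simp [Hset, hhet]⟩
    have hmin : (Hset a b).min' hHne = j.succ := by
      have hmm := Finset.min'_mem (Hset a b) hHne
      simp only [Hset, Finset.mem_filter, Finset.mem_univ, true_and] at hmm
      have hle : (Hset a b).min' hHne ≤ j.succ :=
        Finset.min'_le _ _ (by simp [Hset, hhet])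
      by_contra hne2
      have hlt : (Hset a b).min' hHne < j.succ := lt_of_le_of_ne hle hne2
      have : (Hset a b).min' hHne ∈ Eset a b j.castSucc := by
        simp only [Eset, Finset.mem_filter, Finset.mem_univ, true_and]
        refine ⟨hmm, ?_⟩
        rw [Fin.le_def]
        have := Fin.lt_def.1 hlt
        simp only [Fin.val_succ] at this
        simp only [Fin.coe_castSucc]
        omega
      rw [hEe] at this
      exact absurd this (Finset.notMem_empty _)
    rw [sigmaStar_het a b c hhet]
    rw [sigmaStar, dif_neg (by rw [hEe]; exact Finset.not_nonempty_empty), dif_pos hHne, hmin]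
  -- now the bijection
  rw [nRecomb]
  refine Finset.card_bij'
    (fun j hj =>
      ((Eset a b j.castSucc).max'
        (hchange j (by simpa using hj)).2, j.succ))
    (fun pq hpq => ⟨pq.2.val - 1, by
      have h := mem_pairs (by simpa using hpq)
      have h1 := Fin.lt_def.1 h.1
      have h2 := pq.2.isLt
      omega⟩) ?hi ?hj ?left ?right
  case hi =>
    -- maps into pairs
    intro j hj
    simp only [Finset.mem_filter, Finset.mem_univ, true_and] at hj
    obtain ⟨hhet, hEne⟩ := hchange j hj
    set p := (Eset a b j.castSucc).max' hEne with hp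
    have hpm := Finset.max'_mem (Eset a b j.castSucc) hEne
    simp only [Eset, Finset.mem_filter, Finset.mem_univ, true_and] at hpm
    have hplt : p < j.succ := lt_of_le_of_lt hpm.2 (Fin.castSucc_lt_succ : j.castSucc < j.succ)
    have hmid : ∀ u, p < u → u < j.succ → a u = b u := by
      intro u hu1 hu2
      by_contra hu
      have : u ∈ Eset a b j.castSucc := by
        simp only [Eset, Finset.mem_filter, Finset.mem_univ, true_and]
        refine ⟨hu, ?_⟩
        rw [Fin.le_def]
        have := Fin.lt_def.1 hu2
        simp only [Fin.val_succ] at this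
        simp only [Fin.coe_castSucc]
        omega
      exact absurd (Finset.le_max' _ _ this) (not_le.2 hu1)
    have hforced : forced a c p ≠ forced a c j.succ := by
      have e1 : sigmaStar a b c j.castSucc = forced a c p := by
        rw [sigmaStar, dif_pos hEne]
      have e2 : sigmaStar a b c j.succ = forced a c j.succ := sigmaStar_het a b c hhet
      rw [← e1, ← e2]; exact hj
    simp only [pairs, Finset.mem_filter, Finset.mem_univ, true_and]
    exact ⟨hplt, hpm.1, hhet, hmid, (forced_ne_iff a c _ _).1 hforced⟩
  case hj =>
    -- maps into change set
    intro pq hpq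
    have h := mem_pairs (a := a) (b := b) (c := c) (by simpa using hpq)
    obtain ⟨hlt, hp, hq, hmid, hf⟩ := h
    have h1 := Fin.lt_def.1 hlt
    have h2 := pq.2.isLt
    set j : Fin n := ⟨pq.2.val - 1, by omega⟩ with hjdef
    have hsucc : j.succ = pq.2 := Fin.ext (by simp [hjdef]; omega)
    have hps : pq.1 ≤ j.castSucc := by
      rw [Fin.le_def]; simp [hjdef]; omega
    have hsq : j.castSucc < pq.2 := by
      rw [← hsucc]; exact Fin.castSucc_lt_succ
    have hEne : (Eset a b j.castSucc).Nonempty := ⟨pq.1, by simp [Eset, hp, hps]⟩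
    have hmax := max'_eq_fst (by simpa using hpq) hps hsq hEne
    simp only [Finset.mem_filter, Finset.mem_univ, true_and]
    rw [hsucc, sigmaStar_het a b c hq, sigmaStar, dif_pos hEne, hmax]
    exact hf
  case left =>
    intro j hj
    exact Fin.ext (by simp)
  case right =>
    intro pq hpq
    have h := mem_pairs (a := a) (b := b) (c := c) (by simpa using hpq)
    obtain ⟨hlt, hp, hq, hmid, hf⟩ := h
    have h1 := Fin.lt_def.1 hlt
    have h2 := pq.2.isLt
    set j : Fin n := ⟨pq.2.val - 1, by omega⟩ with hjdef
    have hsucc : j.succ = pq.2 := Fin.ext (by simp [hjdef]; omega)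
    have hps : pq.1 ≤ j.castSucc := by
      rw [Fin.le_def]; simp [hjdef]; omega
    have hsq : j.castSucc < pq.2 := by
      rw [← hsucc]; exact Fin.castSucc_lt_succ
    have hEne : (Eset a b j.castSucc).Nonempty := ⟨pq.1, by simp [Eset, hp, hps]⟩
    have hmax := max'_eq_fst (by simpa using hpq) hps hsq hEne
    apply Prod.ext
    · exact hmax
    · exact hsucc

end Stmt3Aux

/-- the minimum number of recombinations over valid origin sequences equals the
number of pairs of consecutive heterozygous sites of the parent on which the forced origin
changes. -/
theorem stmt3 (n : ℕ) (a b c : Fin (n + 1) → Bool)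
    (hc : ∀ s, c s = a s ∨ c s = b s) :
    sInf {k | ∃ σ : Fin (n + 1) → Fin 2, IsValidOrigin a b c σ ∧ nRecomb σ = k} =
      (Finset.univ.filter fun pq : Fin (n + 1) × Fin (n + 1) =>
        pq.1 < pq.2 ∧ a pq.1 ≠ b pq.1 ∧ a pq.2 ≠ b pq.2 ∧
        (∀ u, pq.1 < u → u < pq.2 → a u = b u) ∧
        ¬((c pq.1 = a pq.1) ↔ (c pq.2 = a pq.2))).card := by
  have hrhs : (Finset.univ.filter fun pq : Fin (n + 1) × Fin (n + 1) =>
        pq.1 < pq.2 ∧ a pq.1 ≠ b pq.1 ∧ a pq.2 ≠ b pq.2 ∧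
        (∀ u, pq.1 < u → u < pq.2 → a u = b u) ∧
        ¬((c pq.1 = a pq.1) ↔ (c pq.2 = a pq.2))).card = (Stmt3Aux.pairs a b c).card := rfl
  rw [hrhs]
  apply le_antisymm
  · apply Nat.sInf_le
    exact ⟨Stmt3Aux.sigmaStar a b c, Stmt3Aux.sigmaStar_valid hc, Stmt3Aux.sigmaStar_count a b c⟩
  · apply le_csInf
    · exact ⟨(Stmt3Aux.pairs a b c).card, Stmt3Aux.sigmaStar a b c,
        Stmt3Aux.sigmaStar_valid hc, Stmt3Aux.sigmaStar_count a b c⟩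
    · rintro k ⟨σ, hσ, rfl⟩
      exact Stmt3Aux.lower_bound hc hσ
end

section
/- With the setup of the previous statement (parent haplotypes a, b, child haplotype c with c(s) ∈ {a(s), b(s)} for all s, and forced origins f(1),...,f(r) at the parent's heterozygous sites t_1 < ... < t_r): if σ is a valid origin sequence achieving the minimum number of recombinations and σ has a recombination between positions q and q+1 with t_j ≤ q < q+1 ≤ t_{j+1} for some j with f(j) ≠ f(j+1), then for every q' with t_j ≤ q' < t_{j+1} there exists a valid origin sequence σ' with the same total number of recombinations that has a recombination between q' and q'+1 and agrees with σ outside the interval (t_j, t_{j+1}). -/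
/-- a recombination of a minimum valid origin sequence lying between two
consecutive heterozygous sites `tj < tj1` of the parent with differing forced origins can be
shifted to any position `q'` in the interval `[tj, tj1)`, keeping validity, the total number
of recombinations, and the values of `σ` outside the open interval `(tj, tj1)`. -/
theorem stmt4 (n : ℕ) (a b c : Fin (n + 1) → Bool)
    (hc : ∀ s, c s = a s ∨ c s = b s)
    (σ : Fin (n + 1) → Fin 2) (hσ : IsValidOrigin a b c σ)
    (hmin : ∀ σ' : Fin (n + 1) → Fin 2, IsValidOrigin a b c σ' → nRecomb σ ≤ nRecomb σ')
    (tj tj1 : Fin (n + 1)) (htj : tj < tj1)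
    (hhet1 : a tj ≠ b tj) (hhet2 : a tj1 ≠ b tj1)
    (hcons : ∀ u, tj < u → u < tj1 → a u = b u)
    (hforced : ¬((c tj = a tj) ↔ (c tj1 = a tj1)))
    (q : Fin n) (hrec : σ q.castSucc ≠ σ q.succ)
    (hq1 : tj ≤ q.castSucc) (hq2 : q.succ ≤ tj1) :
    ∀ q' : Fin n, tj ≤ q'.castSucc → q'.castSucc < tj1 →
      ∃ σ' : Fin (n + 1) → Fin 2, IsValidOrigin a b c σ' ∧
        nRecomb σ' = nRecomb σ ∧
        σ' q'.castSucc ≠ σ' q'.succ ∧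
        ∀ s : Fin (n + 1), (s ≤ tj ∨ tj1 ≤ s) → σ' s = σ s := by
  have h2 : ∀ x : Fin 2, x = 0 ∨ x = 1 := by decide
  have key : ∀ u : Fin (n+1), a u ≠ b u → ((c u = a u) ↔ σ u = 0) := by
    intro u hu
    rcases h2 (σ u) with h | h
    · exact ⟨fun _ => h, fun h0 => (hσ u).1 h0⟩
    · constructor
      · intro hca
        have hb := (hσ u).2 h
        rw [hca] at hb
        exact absurd hb hu
      · intro h0
        rw [h0] at h
        exact absurd h (by decide)
  have hne : σ tj ≠ σ tj1 := by
    intro he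
    exact hforced (by rw [key tj hhet1, key tj1 hhet2, he])
  intro q' hq'1 hq'2
  set σ' : Fin (n+1) → Fin 2 := fun s =>
    if tj < s ∧ s < tj1 then (if (s : ℕ) ≤ (q' : ℕ) then σ tj else σ tj1) else σ s with hσ'def
  have hq'cs : (tj : ℕ) ≤ (q' : ℕ) := by simpa [Fin.le_def] using hq'1
  have hq'lt : (q' : ℕ) < (tj1 : ℕ) := by simpa [Fin.lt_def] using hq'2
  have hout : ∀ s, (s ≤ tj ∨ tj1 ≤ s) → σ' s = σ s := by
    intro s hs
    have hns : ¬(tj < s ∧ s < tj1) := by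
      rcases hs with h | h
      · rintro ⟨h1, -⟩; exact absurd (lt_of_lt_of_le h1 h) (lt_irrefl _)
      · rintro ⟨-, h2'⟩; exact absurd (lt_of_lt_of_le h2' h) (lt_irrefl _)
    simp only [hσ'def, if_neg hns]
  have hval : ∀ s : Fin (n+1), tj ≤ s → s ≤ tj1 →
      σ' s = if (s : ℕ) ≤ (q' : ℕ) then σ tj else σ tj1 := by
    intro s h1 h2'
    by_cases hs : tj < s ∧ s < tj1
    · simp only [hσ'def, if_pos hs]
    · have : s = tj ∨ s = tj1 := by
        rcases h1.lt_or_eq with h | h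
        · rcases h2'.lt_or_eq with h' | h'
          · exact absurd ⟨h, h'⟩ hs
          · right; exact h'
        · left; exact h.symm
      rcases this with rfl | rfl
      · rw [hout s (Or.inl le_rfl), if_pos hq'cs]
      · rw [hout s (Or.inr le_rfl), if_neg (by omega)]
  have hvalid : IsValidOrigin a b c σ' := by
    intro s
    by_cases hs : tj < s ∧ s < tj1
    · have hab : a s = b s := hcons s hs.1 hs.2
      have hca : c s = a s := by rcases hc s with h | h; exact h; rw [h, hab]
      exact ⟨fun _ => hca, fun _ => hab ▸ hca⟩
    · have he : σ' s = σ s := by simp only [hσ'def, if_neg hs]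
      rw [he]; exact hσ s
  have hv1 : σ' q'.castSucc = σ tj := by
    rw [hval q'.castSucc hq'1 (le_of_lt hq'2)]
    simp
  have hv2 : σ' q'.succ = σ tj1 := by
    have h1 : tj ≤ q'.succ := by simp [Fin.le_def]; omega
    have h2' : q'.succ ≤ tj1 := by simp [Fin.le_def]; omega
    rw [hval q'.succ h1 h2']
    simp
  refine ⟨σ', hvalid, ?_, by rw [hv1, hv2]; exact hne, hout⟩
  classical
  set P : Fin n → Prop := fun j => (tj : ℕ) ≤ (j : ℕ) ∧ (j : ℕ) + 1 ≤ (tj1 : ℕ) with hP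
  have hpart : ∀ τ : Fin (n+1) → Fin 2, nRecomb τ =
      ((Finset.univ.filter fun j : Fin n => τ j.castSucc ≠ τ j.succ).filter P).card +
      ((Finset.univ.filter fun j : Fin n => τ j.castSucc ≠ τ j.succ).filter fun j => ¬ P j).card := by
    intro τ
    rw [nRecomb, Finset.card_filter_add_card_filter_not]
  have houtset :
      ((Finset.univ.filter fun j : Fin n => σ' j.castSucc ≠ σ' j.succ).filter fun j => ¬ P j) =
      ((Finset.univ.filter fun j : Fin n => σ j.castSucc ≠ σ j.succ).filter fun j => ¬ P j) := by
    ext j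
    simp only [Finset.mem_filter, Finset.mem_univ, true_and, hP]
    constructor <;> intro ⟨h1, h3⟩ <;> refine ⟨?_, h3⟩
    all_goals {
      have hj : (j : ℕ) < (tj : ℕ) ∨ (tj1 : ℕ) ≤ (j : ℕ) := by omega
      have e1 : σ' j.castSucc = σ j.castSucc := by
        apply hout; rcases hj with h | h
        · left; simp [Fin.le_def]; omega
        · right; simp [Fin.le_def]; omega
      have e2 : σ' j.succ = σ j.succ := by
        apply hout; rcases hj with h | h
        · left; simp [Fin.le_def]; omega
        · right; simp [Fin.le_def]; omega
      first
      | (rw [e1, e2] at h1; exact h1)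
      | (rw [e1, e2]; exact h1)
    }
  have hinσ' :
      ((Finset.univ.filter fun j : Fin n => σ' j.castSucc ≠ σ' j.succ).filter P) = {q'} := by
    ext j
    simp only [Finset.mem_filter, Finset.mem_univ, true_and, Finset.mem_singleton, hP]
    constructor
    · rintro ⟨h1, h3, h4⟩
      have e1 : σ' j.castSucc = if (j : ℕ) ≤ (q' : ℕ) then σ tj else σ tj1 := by
        rw [hval j.castSucc (by simp [Fin.le_def]; omega) (by simp [Fin.le_def]; omega)]
        simp
      have e2 : σ' j.succ = if (j : ℕ) + 1 ≤ (q' : ℕ) then σ tj else σ tj1 := by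
        rw [hval j.succ (by simp [Fin.le_def]; omega) (by simp [Fin.le_def]; omega)]
        simp
      rw [e1, e2] at h1
      by_contra hne'
      have hjq : (j : ℕ) ≠ (q' : ℕ) := fun h => hne' (Fin.ext h)
      rcases Nat.lt_or_ge (j : ℕ) (q' : ℕ) with h | h
      · rw [if_pos (by omega : (j:ℕ) ≤ (q':ℕ)), if_pos (by omega : (j:ℕ)+1 ≤ (q':ℕ))] at h1
        exact h1 rfl
      · rw [if_neg (by omega : ¬ (j:ℕ) ≤ (q':ℕ)), if_neg (by omega : ¬ (j:ℕ)+1 ≤ (q':ℕ))] at h1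
        exact h1 rfl
    · rintro rfl
      refine ⟨?_, hq'cs, by omega⟩
      rw [hv1, hv2]; exact hne
  have hqmem : q ∈ ((Finset.univ.filter fun j : Fin n => σ j.castSucc ≠ σ j.succ).filter P) := by
    simp only [Finset.mem_filter, Finset.mem_univ, true_and, hP]
    refine ⟨hrec, ?_, ?_⟩
    · simpa [Fin.le_def] using hq1
    · simpa [Fin.le_def] using hq2
  have hle : nRecomb σ' ≤ nRecomb σ := by
    rw [hpart σ', hpart σ, houtset, hinσ', Finset.card_singleton]
    exact Nat.add_le_add (Finset.card_pos.mpr ⟨q, hqmem⟩) le_rfl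
  exact le_antisymm hle (hmin σ' hvalid)
end

section
/- Let g : Fin m → Fin 3 be a genotype vector with heterozygous sites s_1 < s_2 < ... < s_η (where g(s) = 2), η ≥ 1. For each i ∈ {1,...,η−1}, assign a color c_i ∈ {red, blue}. Then there exists a unique binary string h : Fin m → Bool such that: (1) h(s) = g(s) at every homozygous site s; (2) h(s_1) = 0; and (3) for each i, h(s_i) ≠ h(s_{i+1}) iff c_i = red. Consequently the map c ↦ {h, g − h} is a bijection from {red, blue}^(η−1) to the set of genotype-consistent unordered haplotype pairs for g, where (g − h)(s) is defined as g(s) − h(s) at homozygous sites and 1 − h(s) at heterozygous sites. -/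
/-- The complementary haplotype `g - h`: flip `h` at heterozygous sites, keep it at
homozygous sites. -/
def gMinus {m : ℕ} (g : Fin m → Fin 3) (h : Fin m → Bool) : Fin m → Bool :=
  fun s => if g s = 2 then !(h s) else h s

/-- An ordered pair of haplotypes `(h, h')` is genotype-consistent with `g`. -/
def GenoConsistentPair {m : ℕ} (g : Fin m → Fin 3) (h h' : Fin m → Bool) : Prop :=
  ∀ s, (g s = 0 → h s = false ∧ h' s = false) ∧
       (g s = 1 → h s = true ∧ h' s = true) ∧
       (g s = 2 → h s ≠ h' s)

namespace Stmt8Aux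

/-- prefix parity of the coloring: `prefN c n = xor of c j over j < n`. -/
def prefN {r : ℕ} (c : Fin r → Bool) : ℕ → Bool
  | 0 => false
  | n+1 => if h : n < r then xor (c ⟨n, h⟩) (prefN c n) else prefN c n

lemma prefN_succ {r : ℕ} (c : Fin r → Bool) (j : Fin r) :
    prefN c (j.val + 1) = xor (c j) (prefN c j.val) := by
  simp [prefN, j.isLt]

/-- The canonical haplotype determined by the coloring `c`. -/
noncomputable def Fdef {m r : ℕ} (g : Fin m → Fin 3) (s : Fin (r + 1) → Fin m)
    (c : Fin r → Bool) : Fin m → Bool :=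
  fun x => if hx : ∃ i, s i = x then prefN c (Classical.choose hx).val
           else decide (g x = 1)

lemma Fdef_s {m r : ℕ} (g : Fin m → Fin 3) (s : Fin (r + 1) → Fin m)
    (hs : Function.Injective s) (c : Fin r → Bool) (i : Fin (r + 1)) :
    Fdef g s c (s i) = prefN c i.val := by
  have hx : ∃ j, s j = s i := ⟨i, rfl⟩
  have := Classical.choose_spec hx
  rw [Fdef, dif_pos hx, hs this]

lemma Fdef_not {m r : ℕ} (g : Fin m → Fin 3) (s : Fin (r + 1) → Fin m)
    (hrange : ∀ x, g x = 2 ↔ ∃ i, s i = x) (c : Fin r → Bool) (x : Fin m)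
    (hx : g x ≠ 2) : Fdef g s c x = decide (g x = 1) := by
  rw [Fdef, dif_neg (fun h => hx ((hrange x).mpr h))]

lemma fin3_cases (a : Fin 3) : a = 0 ∨ a = 1 ∨ a = 2 := by fin_cases a <;> simp

end Stmt8Aux

open Stmt8Aux in
/-- given a genotype `g` whose heterozygous sites are `s 0 < ... < s r`
(`η = r + 1 ≥ 1`), every red/blue coloring `c` of the consecutive pairs of heterozygous
sites (red = `true` = alternating) determines a unique haplotype `h` with `h = g` at
homozygous sites, `h (s 0) = false`, and alternation at the `j`-th pair iff `c j` is red;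
moreover `c ↦ {h, g - h}` is a bijection onto the genotype-consistent unordered pairs. -/
theorem stmt8 (m r : ℕ) (g : Fin m → Fin 3) (s : Fin (r + 1) → Fin m)
    (hs : StrictMono s) (hrange : ∀ x, g x = 2 ↔ ∃ i, s i = x) :
    (∀ c : Fin r → Bool, ∃! h : Fin m → Bool,
      (∀ x, g x ≠ 2 → h x = decide (g x = 1)) ∧ h (s 0) = false ∧
      (∀ j : Fin r, (h (s j.castSucc) ≠ h (s j.succ)) ↔ c j = true)) ∧
    ∃ F : (Fin r → Bool) → (Fin m → Bool),
      (∀ c : Fin r → Bool,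
        (∀ x, g x ≠ 2 → F c x = decide (g x = 1)) ∧ F c (s 0) = false ∧
        (∀ j : Fin r, (F c (s j.castSucc) ≠ F c (s j.succ)) ↔ c j = true)) ∧
      Set.BijOn (fun c => Sym2.mk (F c) (gMinus g (F c))) Set.univ
        {q : Sym2 (Fin m → Bool) | ∃ h h', q = Sym2.mk h h' ∧ GenoConsistentPair g h h'} := by
  classical
  have hsi : Function.Injective s := hs.injective
  set F : (Fin r → Bool) → (Fin m → Bool) := Fdef g s with hF
  -- the specification satisfied by F c
  have spec : ∀ c : Fin r → Bool,
      (∀ x, g x ≠ 2 → F c x = decide (g x = 1)) ∧ F c (s 0) = false ∧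
      (∀ j : Fin r, (F c (s j.castSucc) ≠ F c (s j.succ)) ↔ c j = true) := by
    intro c
    refine ⟨fun x hx => Fdef_not g s hrange c x hx, ?_, ?_⟩
    · rw [hF, Fdef_s g s hsi]; rfl
    · intro j
      rw [hF, Fdef_s g s hsi, Fdef_s g s hsi]
      have h1 : (j.castSucc : Fin (r+1)).val = j.val := rfl
      have h2 : (j.succ : Fin (r+1)).val = j.val + 1 := rfl
      rw [h1, h2, prefN_succ]
      cases c j <;> cases prefN c j.val <;> simp
  -- uniqueness
  have uniq : ∀ c : Fin r → Bool, ∀ h : Fin m → Bool,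
      ((∀ x, g x ≠ 2 → h x = decide (g x = 1)) ∧ h (s 0) = false ∧
      (∀ j : Fin r, (h (s j.castSucc) ≠ h (s j.succ)) ↔ c j = true)) → h = F c := by
    intro c h ⟨h1, h2, h3⟩
    have key : ∀ i : Fin (r + 1), h (s i) = prefN c i.val := by
      intro i
      induction i using Fin.induction with
      | zero => exact h2
      | succ j ih =>
        have h2' : (j.succ : Fin (r+1)).val = j.val + 1 := rfl
        have h1' : (j.castSucc : Fin (r+1)).val = j.val := rfl
        rw [h1'] at ih
        rw [h2', prefN_succ, ← ih]
        have hiff := h3 j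
        cases hc : c j <;> rw [hc] at hiff <;> revert hiff <;>
          cases h (s j.castSucc) <;> cases h (s j.succ) <;> simp
    funext x
    by_cases hx : g x = 2
    · obtain ⟨i, rfl⟩ := (hrange x).mp hx
      rw [key i, hF, Fdef_s g s hsi]
    · exact (h1 x hx).trans (Fdef_not g s hrange c x hx).symm
  constructor
  · intro c
    exact ⟨F c, spec c, fun h hh => uniq c h hh⟩
  · refine ⟨F, spec, ?_, ?_, ?_⟩
    · -- MapsTo
      intro c _
      refine ⟨F c, gMinus g (F c), rfl, ?_⟩
      intro x
      refine ⟨fun h0 => ?_, fun h1 => ?_, fun h2 => ?_⟩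
      · have hv : F c x = false := by
          rw [(spec c).1 x (by rw [h0]; decide), h0]; rfl
        refine ⟨hv, ?_⟩
        rw [gMinus, if_neg (by rw [h0]; decide), hv]
      · have hv : F c x = true := by
          rw [(spec c).1 x (by rw [h1]; decide), h1]; rfl
        refine ⟨hv, ?_⟩
        rw [gMinus, if_neg (by rw [h1]; decide), hv]
      · rw [gMinus, if_pos h2]
        cases F c x <;> simp
    · -- InjOn
      intro c _ c' _ heq
      simp only at heq
      rw [Sym2.eq_iff] at heq
      have hs0 : g (s 0) = 2 := (hrange (s 0)).mpr ⟨0, rfl⟩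
      rcases heq with ⟨hFF, _⟩ | ⟨hF1, _⟩
      · funext j
        have e1 := ((spec c).2.2 j)
        have e2 := ((spec c').2.2 j)
        rw [hFF] at e1
        cases hc : c j <;> cases hc' : c' j
        · rfl
        · rw [hc] at e1; rw [hc'] at e2
          exact absurd (e1.mp (e2.mpr rfl)) (by decide)
        · rw [hc] at e1; rw [hc'] at e2
          exact absurd (e2.mp (e1.mpr rfl)) (by decide)
        · rfl
      · exfalso
        have h1 : F c (s 0) = false := (spec c).2.1
        have h2 : gMinus g (F c') (s 0) = true := by
          rw [gMinus, if_pos hs0, (spec c').2.1]; rfl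
        rw [hF1, h2] at h1
        exact absurd h1 (by decide)
    · -- SurjOn
      intro q hq
      obtain ⟨h, h', rfl, hcons⟩ := hq
      have hs0 : g (s 0) = 2 := (hrange (s 0)).mpr ⟨0, rfl⟩
      -- helper: consistent pair with first coordinate false at s 0 is in the image
      have main : ∀ a b : Fin m → Bool, GenoConsistentPair g a b → a (s 0) = false →
          ∃ c, Sym2.mk (F c) (gMinus g (F c)) = Sym2.mk a b := by
        intro a b hab ha0
        set c : Fin r → Bool := fun j => a (s j.castSucc) != a (s j.succ) with hc
        have haF : a = F c := by
          apply uniq c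
          refine ⟨?_, ha0, ?_⟩
          · intro x hx
            rcases fin3_cases (g x) with h0 | h1 | h2
            · rw [(hab x).1 h0 |>.1, h0]; rfl
            · rw [(hab x).2.1 h1 |>.1, h1]; rfl
            · exact absurd h2 hx
          · intro j
            rw [hc]
            simp [bne_iff_ne]
        have hbF : b = gMinus g (F c) := by
          rw [← haF]
          funext x
          by_cases hx : g x = 2
          · have := (hab x).2.2 hx
            rw [gMinus, if_pos hx]
            revert this; cases a x <;> cases b x <;> simp
          · rw [gMinus, if_neg hx]
            rcases fin3_cases (g x) with h0 | h1 | h2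
            · rw [(hab x).1 h0 |>.1, (hab x).1 h0 |>.2]
            · rw [(hab x).2.1 h1 |>.1, (hab x).2.1 h1 |>.2]
            · exact absurd h2 hx
        exact ⟨c, by rw [← hbF, ← haF]⟩
      have hne : h (s 0) ≠ h' (s 0) := (hcons (s 0)).2.2 hs0
      by_cases hh0 : h (s 0) = false
      · obtain ⟨c, hc⟩ := main h h' hcons hh0
        exact ⟨c, Set.mem_univ c, hc⟩
      · have hh'0 : h' (s 0) = false := by
          revert hne hh0; cases h (s 0) <;> cases h' (s 0) <;> simp
        have hcons' : GenoConsistentPair g h' h := by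
          intro x
          exact ⟨fun h0 => ⟨((hcons x).1 h0).2, ((hcons x).1 h0).1⟩,
            fun h1 => ⟨((hcons x).2.1 h1).2, ((hcons x).2.1 h1).1⟩,
            fun h2 => Ne.symm ((hcons x).2.2 h2)⟩
        obtain ⟨c, hc⟩ := main h' h hcons' hh'0
        exact ⟨c, Set.mem_univ c, hc.trans Sym2.eq_swap⟩
end

section
/- Let a, b, c : Fin m → Bool with c(s) ∈ {a(s), b(s)} for all s, and let s < t be two consecutive heterozygous sites of the parent (a(s) ≠ b(s), a(t) ≠ b(t), and a(u) = b(u) for all s < u < t). Then every valid origin sequence σ for (a, b, c) has at least one recombination in the interval [s, t) if and only if exactly one of the following holds: c alternates on (s,t) while a does not (c(s) ≠ c(t) and a(s) = a(t)), or c does not alternate while a does (c(s) = c(t) and a(s) ≠ a(t)). -/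
private lemma const_of_no_recomb {n : ℕ} (σ : Fin (n + 1) → Fin 2) (s t : Fin (n + 1))
    (hst : s ≤ t)
    (h : ∀ q : Fin n, s ≤ q.castSucc → q.castSucc < t → σ q.castSucc = σ q.succ) :
    σ s = σ t := by
  have ht := t.isLt
  have aux : ∀ k (hk : s.val + k ≤ t.val), σ s = σ ⟨s.val + k, by omega⟩ := by
    intro k
    induction k with
    | zero =>
        intro _
        exact congrArg σ (Fin.ext (by simp)).symm |>.symm |>.symm
    | succ k ih =>
        intro hk
        have h1 := ih (by omega)
        have h2 := h ⟨s.val + k, by omega⟩ (by simp [Fin.le_def])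
          (by simp [Fin.lt_def]; omega)
        simp only [Fin.castSucc, Fin.castAdd, Fin.castLE, Fin.succ] at h2
        rw [h1]
        convert h2 using 2
        exact Fin.ext (Nat.add_assoc _ _ _).symm
  have hle : s.val ≤ t.val := hst
  have := aux (t.val - s.val) (by omega)
  rw [this]
  congr 1
  exact Fin.ext (by simp; omega)

/-- for consecutive heterozygous sites `s < t` of the parent, every valid
origin sequence has a recombination in `[s, t)` iff exactly one of the following holds: the
child alternates on `(s, t)` while the parent haplotype `a` does not, or the child does not
alternate while `a` does. -/
theorem stmt12 (n : ℕ) (a b c : Fin (n + 1) → Bool)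
    (hc : ∀ s, c s = a s ∨ c s = b s)
    (s t : Fin (n + 1)) (hst : s < t)
    (hhets : a s ≠ b s) (hhett : a t ≠ b t)
    (hcons : ∀ u, s < u → u < t → a u = b u) :
    (∀ σ : Fin (n + 1) → Fin 2, IsValidOrigin a b c σ →
        ∃ q : Fin n, s ≤ q.castSucc ∧ q.castSucc < t ∧ σ q.castSucc ≠ σ q.succ) ↔
      ((c s ≠ c t ∧ a s = a t) ∨ (c s = c t ∧ a s ≠ a t)) := by
  constructor
  · intro hall
    by_contra hxor
    push_neg at hxor
    obtain ⟨hx1, hx2⟩ := hxor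
    -- key: c s = a s ↔ c t = a t
    have key : (c s = a s) ↔ (c t = a t) := by
      have hcs := hc s; have hct := hc t
      cases h1 : c s <;> cases h2 : c t <;> cases h3 : a s <;> cases h4 : a t <;>
        cases h5 : b s <;> cases h6 : b t <;> simp_all
    set o : Fin 2 := if c s = a s then 0 else 1 with ho
    set σ : Fin (n + 1) → Fin 2 :=
      fun u => if s.val ≤ u.val ∧ u.val ≤ t.val then o else (if c u = a u then 0 else 1)
      with hσdef
    have hval : IsValidOrigin a b c σ := by
      intro u
      by_cases hu : s.val ≤ u.val ∧ u.val ≤ t.val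
      · have hσu : σ u = o := if_pos hu
        rw [hσu]
        by_cases hus : u = s
        · subst hus
          by_cases hca : c u = a u
          · simp [ho, hca]
          · have : c u = b u := (hc u).resolve_left hca
            simp [ho, hca, this]
        · by_cases hut : u = t
          · subst hut
            by_cases hca : c s = a s
            · simp [ho, hca, key.mp hca]
            · have hct : c u ≠ a u := fun h => hca (key.mpr h)
              have : c u = b u := (hc u).resolve_left hct
              simp [ho, hca, this]
          · have hsu : s < u := lt_of_le_of_ne (show s ≤ u from hu.1) (fun h => hus h.symm)
            have hut' : u < t := lt_of_le_of_ne (show u ≤ t from hu.2) hut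
            have hab : a u = b u := hcons u hsu hut'
            have hca : c u = a u := by rcases hc u with h | h; exact h; rw [h, hab]
            constructor <;> intro _ <;> simp [hca, hab]
      · have hσu : σ u = if c u = a u then 0 else 1 := if_neg hu
        rw [hσu]
        by_cases hca : c u = a u
        · simp [hca]
        · have : c u = b u := (hc u).resolve_left hca
          simp [hca, this]
    obtain ⟨q, hq1, hq2, hq3⟩ := hall σ hval
    apply hq3
    have e1 : σ q.castSucc = o := if_pos ⟨hq1, le_of_lt hq2⟩
    have e2 : σ q.succ = o := by
      refine if_pos ⟨?_, ?_⟩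
      · have : (s : ℕ) ≤ q.castSucc := hq1
        simpa [Fin.val_succ] using le_trans this (by simp [Fin.coe_castSucc])
      · have : (q.castSucc : ℕ) < t := hq2
        simpa [Fin.val_succ, Fin.coe_castSucc] using this
    rw [e1, e2]
  · intro hxor σ hσ
    by_contra h
    push_neg at h
    have hconst : σ s = σ t := const_of_no_recomb σ s t (le_of_lt hst) h
    have h2 : σ s = 0 ∨ σ s = 1 := by omega
    rcases h2 with h0 | h1
    · have e1 : c s = a s := (hσ s).1 h0
      have e2 : c t = a t := (hσ t).1 (hconst ▸ h0)
      rcases hxor with ⟨g1, g2⟩ | ⟨g1, g2⟩ <;>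
        cases hh1 : c s <;> cases hh2 : c t <;> cases hh3 : a s <;> cases hh4 : a t <;> simp_all
    · have e1 : c s = b s := (hσ s).2 h1
      have e2 : c t = b t := (hσ t).2 (hconst ▸ h1)
      rcases hxor with ⟨g1, g2⟩ | ⟨g1, g2⟩ <;>
        cases hh1 : c s <;> cases hh2 : c t <;> cases hh3 : a s <;> cases hh4 : a t <;>
        cases hh5 : b s <;> cases hh6 : b t <;> simp_all
end

section
/- Let a, b, c : Fin m → Bool with c(s) ∈ {a(s), b(s)} for all s. Then the minimum number of recombinations needed to inherit c from (a, b) equals the number of consecutive pairs (t_j, t_{j+1}) of heterozygous sites of the parent on which the alternation pattern of c differs from that of a, i.e., the number of j with (c(t_j) ≠ c(t_{j+1})) XOR (a(t_j) ≠ a(t_{j+1})), where t_1 < ... < t_r are the sites with a(t) ≠ b(t). -/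
namespace Stmt13Aux

variable {n : ℕ}

/-- The forced origin at a heterozygous site. -/
def forcedOr (a c : Fin (n + 1) → Bool) (s : Fin (n + 1)) : Fin 2 :=
  if c s = a s then 0 else 1

/-- The set of heterozygous sites. -/
def hetSet (a b : Fin (n + 1) → Bool) : Finset (Fin (n + 1)) :=
  Finset.univ.filter fun s => a s ≠ b s

lemma mem_hetSet {a b : Fin (n + 1) → Bool} {s : Fin (n + 1)} :
    s ∈ hetSet a b ↔ a s ≠ b s := by simp [hetSet]

/-- The canonical optimal origin sequence. -/
noncomputable def sigmaStar (a b c : Fin (n + 1) → Bool) (s : Fin (n + 1)) : Fin 2 :=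
  if h : ((hetSet a b).filter (· ≤ s)).Nonempty then
    forcedOr a c (((hetSet a b).filter (· ≤ s)).max' h)
  else if h2 : (hetSet a b).Nonempty then forcedOr a c ((hetSet a b).min' h2) else 0

lemma forced_eq_of_valid {a b c : Fin (n + 1) → Bool} {σ : Fin (n + 1) → Fin 2}
    (hv : IsValidOrigin a b c σ) {s : Fin (n + 1)} (hs : a s ≠ b s) :
    σ s = forcedOr a c s := by
  obtain ⟨h0, h1⟩ := hv s
  have htwo : ∀ x : Fin 2, x = 0 ∨ x = 1 := by decide
  unfold forcedOr
  by_cases h : c s = a s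
  · simp only [if_pos h]
    rcases htwo (σ s) with h' | h'
    · exact h'
    · exact absurd (h.symm.trans (h1 h')) hs
  · simp only [if_neg h]
    rcases htwo (σ s) with h' | h'
    · exact absurd (h0 h') h
    · exact h'

lemma forced_key : ∀ ap bp cp aq bq cq : Bool,
    (cp = ap ∨ cp = bp) → (cq = aq ∨ cq = bq) → ap ≠ bp → aq ≠ bq →
    (((if cp = ap then (0 : Fin 2) else 1) ≠ if cq = aq then (0 : Fin 2) else 1) ↔
      ¬((cp ≠ cq) ↔ (ap ≠ aq))) := by decide

lemma forced_ne_iff {a b c : Fin (n + 1) → Bool} (hc : ∀ s, c s = a s ∨ c s = b s)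
    {p q : Fin (n + 1)} (hp : a p ≠ b p) (hq : a q ≠ b q) :
    forcedOr a c p ≠ forcedOr a c q ↔ ¬((c p ≠ c q) ↔ (a p ≠ a q)) :=
  forced_key _ _ _ _ _ _ (hc p) (hc q) hp hq

lemma sigmaStar_het {a b c : Fin (n + 1) → Bool} {s : Fin (n + 1)} (hs : a s ≠ b s) :
    sigmaStar a b c s = forcedOr a c s := by
  have hmem : s ∈ (hetSet a b).filter (· ≤ s) := by
    simp [Finset.mem_filter, mem_hetSet, hs]
  have hne : ((hetSet a b).filter (· ≤ s)).Nonempty := ⟨s, hmem⟩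
  have hmax : ((hetSet a b).filter (· ≤ s)).max' hne = s := by
    apply le_antisymm
    · have h := Finset.max'_mem _ hne
      simp only [Finset.mem_filter] at h
      exact h.2
    · exact Finset.le_max' _ s hmem
  unfold sigmaStar
  rw [dif_pos hne, hmax]

lemma sigmaStar_valid {a b c : Fin (n + 1) → Bool} (hc : ∀ s, c s = a s ∨ c s = b s) :
    IsValidOrigin a b c (sigmaStar a b c) := by
  intro s
  by_cases hs : a s = b s
  · have hca : c s = a s := by
      rcases hc s with h | h
      · exact h
      · exact h.trans hs.symm
    exact ⟨fun _ => hca, fun _ => hca.trans hs⟩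
  · rw [sigmaStar_het hs]
    unfold forcedOr
    by_cases h : c s = a s
    · rw [if_pos h]
      exact ⟨fun _ => h, fun h01 => absurd h01 (by decide)⟩
    · have hcb : c s = b s := (hc s).resolve_left h
      rw [if_neg h]
      exact ⟨fun h10 => absurd h10 (by decide), fun _ => hcb⟩

lemma nat_ivt (g : ℕ → Fin 2) :
    ∀ q p, p ≤ q → g p ≠ g q → ∃ j, p ≤ j ∧ j < q ∧ g j ≠ g (j + 1) := by
  intro q
  induction q with
  | zero =>
    intro p hp hne
    have : p = 0 := Nat.le_zero.mp hp
    subst this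
    exact absurd rfl hne
  | succ q ih =>
    intro p hp hne
    rcases Nat.eq_or_lt_of_le hp with he | hlt
    · rw [he] at hne; exact absurd rfl hne
    · have hpq : p ≤ q := Nat.lt_succ_iff.mp hlt
      by_cases hq : g q = g (q + 1)
      · have h' : g p ≠ g q := fun h => hne (h.trans hq)
        obtain ⟨j, h1, h2, h3⟩ := ih p hpq h'
        exact ⟨j, h1, Nat.lt_succ_of_lt h2, h3⟩
      · exact ⟨q, hpq, Nat.lt_succ_self q, hq⟩

lemma fin_ivt (σ : Fin (n + 1) → Fin 2) (p q : Fin (n + 1)) (hpq : p < q)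
    (hne : σ p ≠ σ q) :
    ∃ j : Fin n, p.val ≤ j.val ∧ j.val < q.val ∧ σ j.castSucc ≠ σ j.succ := by
  set g : ℕ → Fin 2 := fun i => σ ⟨min i n, Nat.lt_succ_of_le (Nat.min_le_right i n)⟩ with hg
  have key : ∀ i (h : i ≤ n), g i = σ ⟨i, Nat.lt_succ_of_le h⟩ := by
    intro i h
    simp only [hg]
    congr 1
    exact Fin.ext (Nat.min_eq_left h)
  have hgp : g p.val = σ p := key p.val (Nat.lt_succ_iff.mp p.isLt)
  have hgq : g q.val = σ q := key q.val (Nat.lt_succ_iff.mp q.isLt)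
  have hne' : g p.val ≠ g q.val := by rw [hgp, hgq]; exact hne
  obtain ⟨j, h1, h2, h3⟩ := nat_ivt g q.val p.val (le_of_lt hpq) hne'
  have hjn : j < n := lt_of_lt_of_le h2 (Nat.lt_succ_iff.mp q.isLt)
  refine ⟨⟨j, hjn⟩, h1, h2, ?_⟩
  have e1 : g j = σ ((⟨j, hjn⟩ : Fin n).castSucc) := key j (le_of_lt hjn)
  have e2 : g (j + 1) = σ ((⟨j, hjn⟩ : Fin n).succ) := key (j + 1) hjn
  rw [e1, e2] at h3
  exact h3

/-- The pair set from the statement. -/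
def pairSet (a b c : Fin (n + 1) → Bool) : Finset (Fin (n + 1) × Fin (n + 1)) :=
  Finset.univ.filter fun pq : Fin (n + 1) × Fin (n + 1) =>
    pq.1 < pq.2 ∧ a pq.1 ≠ b pq.1 ∧ a pq.2 ≠ b pq.2 ∧
      (∀ u, pq.1 < u → u < pq.2 → a u = b u) ∧
      ¬((c pq.1 ≠ c pq.2) ↔ (a pq.1 ≠ a pq.2))

lemma mem_pairSet {a b c : Fin (n + 1) → Bool} {pq : Fin (n + 1) × Fin (n + 1)} :
    pq ∈ pairSet a b c ↔
      pq.1 < pq.2 ∧ a pq.1 ≠ b pq.1 ∧ a pq.2 ≠ b pq.2 ∧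
        (∀ u, pq.1 < u → u < pq.2 → a u = b u) ∧
        ¬((c pq.1 ≠ c pq.2) ↔ (a pq.1 ≠ a pq.2)) := by
  simp [pairSet]

lemma lower_bound {a b c : Fin (n + 1) → Bool} (hc : ∀ s, c s = a s ∨ c s = b s)
    {σ : Fin (n + 1) → Fin 2} (hv : IsValidOrigin a b c σ) :
    (pairSet a b c).card ≤ nRecomb σ := by
  classical
  rcases (pairSet a b c).eq_empty_or_nonempty with hE | hNE
  · simp [hE]
  obtain ⟨pq0, hpq0⟩ := hNE
  have hn : 0 < n := by
    have h1 := (mem_pairSet.mp hpq0).1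
    have h2 := pq0.2.isLt
    rw [Fin.lt_def] at h1
    omega
  have key : ∀ pq ∈ pairSet a b c, ∃ j : Fin n,
      pq.1.val ≤ j.val ∧ j.val < pq.2.val ∧ σ j.castSucc ≠ σ j.succ := by
    intro pq hpq
    obtain ⟨hlt, hp, hq, hbet, hxor⟩ := mem_pairSet.mp hpq
    have hσ : σ pq.1 ≠ σ pq.2 := by
      rw [forced_eq_of_valid hv hp, forced_eq_of_valid hv hq]
      exact (forced_ne_iff hc hp hq).mpr hxor
    exact fin_ivt σ _ _ hlt hσ
  set f : Fin (n + 1) × Fin (n + 1) → Fin n := fun pq =>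
    if h : pq ∈ pairSet a b c then (key pq h).choose else ⟨0, hn⟩ with hf
  have hbounds : ∀ pq (h : pq ∈ pairSet a b c),
      pq.1.val ≤ (f pq).val ∧ (f pq).val < pq.2.val ∧ σ (f pq).castSucc ≠ σ (f pq).succ := by
    intro pq h
    simp only [hf, dif_pos h]
    exact (key pq h).choose_spec
  have hmaps : ∀ pq ∈ pairSet a b c,
      f pq ∈ Finset.univ.filter fun j : Fin n => σ j.castSucc ≠ σ j.succ := by
    intro pq h
    simp only [Finset.mem_filter, Finset.mem_univ, true_and]
    exact (hbounds pq h).2.2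
  have hinj : Set.InjOn f (pairSet a b c) := by
    intro x hx y hy hxy
    have hx' : x ∈ pairSet a b c := hx
    have hy' : y ∈ pairSet a b c := hy
    obtain ⟨hltx, hpx, hqx, hbx, _⟩ := mem_pairSet.mp hx'
    obtain ⟨hlty, hpy, hqy, hby, _⟩ := mem_pairSet.mp hy'
    obtain ⟨hx1, hx2, _⟩ := hbounds x hx'
    obtain ⟨hy1, hy2, _⟩ := hbounds y hy'
    have hval : (f x).val = (f y).val := by rw [hxy]
    have e1 : x.1 = y.1 := by
      by_contra hne
      rcases Ne.lt_or_gt hne with h | h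
      · exact hpy (hbx y.1 h (by rw [Fin.lt_def]; omega))
      · exact hpx (hby x.1 h (by rw [Fin.lt_def]; omega))
    have e2 : x.2 = y.2 := by
      by_contra hne
      rcases Ne.lt_or_gt hne with h | h
      · exact hqx (hby x.2 (e1 ▸ hltx) h)
      · exact hqy (hbx y.2 (e1 ▸ hlty) h)
    exact Prod.ext e1 e2
  exact Finset.card_le_card_of_injOn f hmaps hinj

lemma max'_prev {a b : Fin (n + 1) → Bool} {p q t : Fin (n + 1)} (hp : a p ≠ b p)
    (hbet : ∀ u, p < u → u < q → a u = b u) (hpt : p ≤ t) (htq : t < q) :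
    ∃ h : ((hetSet a b).filter (· ≤ t)).Nonempty,
      ((hetSet a b).filter (· ≤ t)).max' h = p := by
  have hmem : p ∈ (hetSet a b).filter (· ≤ t) := by
    simp [Finset.mem_filter, mem_hetSet, hp, hpt]
  refine ⟨⟨p, hmem⟩, ?_⟩
  apply le_antisymm
  · have hm := Finset.max'_mem ((hetSet a b).filter (· ≤ t)) ⟨p, hmem⟩
    simp only [Finset.mem_filter, mem_hetSet] at hm
    by_contra hgt
    push_neg at hgt
    exact hm.1 (hbet _ hgt (lt_of_le_of_lt hm.2 htq))
  · exact Finset.le_max' _ p hmem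

lemma upper_count {a b c : Fin (n + 1) → Bool} (hc : ∀ s, c s = a s ∨ c s = b s) :
    (pairSet a b c).card = nRecomb (sigmaStar a b c) := by
  classical
  unfold nRecomb
  have hlt1 : ∀ pq : Fin (n + 1) × Fin (n + 1), pq ∈ pairSet a b c → pq.2.val - 1 < n := by
    intro pq h
    have h1 := (mem_pairSet.mp h).1
    have h2 := pq.2.isLt
    rw [Fin.lt_def] at h1
    omega
  apply Finset.card_bij (fun pq (h : pq ∈ pairSet a b c) =>
    (⟨pq.2.val - 1, hlt1 pq h⟩ : Fin n))
  · -- maps into edge set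
    intro pq h
    obtain ⟨hlt, hp, hq, hbet, hxor⟩ := mem_pairSet.mp h
    have hq1 : 1 ≤ pq.2.val := by rw [Fin.lt_def] at hlt; omega
    simp only [Finset.mem_filter, Finset.mem_univ, true_and]
    have hsucc : (⟨pq.2.val - 1, hlt1 pq h⟩ : Fin n).succ = pq.2 := by
      apply Fin.ext
      simp only [Fin.val_succ]
      omega
    have hcs : ((⟨pq.2.val - 1, hlt1 pq h⟩ : Fin n).castSucc : Fin (n + 1)).val = pq.2.val - 1 := rfl
    have hpt : pq.1 ≤ (⟨pq.2.val - 1, hlt1 pq h⟩ : Fin n).castSucc := by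
      rw [Fin.le_def, hcs]
      rw [Fin.lt_def] at hlt
      omega
    have htq : ((⟨pq.2.val - 1, hlt1 pq h⟩ : Fin n).castSucc : Fin (n + 1)) < pq.2 := by
      rw [Fin.lt_def, hcs]
      omega
    obtain ⟨hne, hmax⟩ := max'_prev hp hbet hpt htq
    have hcast : sigmaStar a b c ((⟨pq.2.val - 1, hlt1 pq h⟩ : Fin n).castSucc) = forcedOr a c pq.1 := by
      unfold sigmaStar
      rw [dif_pos hne, hmax]
    rw [hsucc, hcast, sigmaStar_het hq]
    exact (forced_ne_iff hc hp hq).mpr hxor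
  · -- injective
    intro x hx y hy hxy
    obtain ⟨hltx, hpx, hqx, hbx, _⟩ := mem_pairSet.mp hx
    obtain ⟨hlty, hpy, hqy, hby, _⟩ := mem_pairSet.mp hy
    rw [Fin.lt_def] at hltx hlty
    have hval : x.2.val - 1 = y.2.val - 1 := congrArg Fin.val hxy
    have e2 : x.2 = y.2 := Fin.ext (by omega)
    have e1 : x.1 = y.1 := by
      by_contra hne
      rcases Ne.lt_or_gt hne with h | h
      · exact hpy (hbx y.1 h (by rw [Fin.lt_def] at *; omega))
      · exact hpx (hby x.1 h (by rw [Fin.lt_def] at *; omega))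
    exact Prod.ext e1 e2
  · -- surjective
    intro j hj
    simp only [Finset.mem_filter, Finset.mem_univ, true_and] at hj
    by_cases hs : a j.succ = b j.succ
    · exfalso
      apply hj
      have hfilter : (hetSet a b).filter (· ≤ j.castSucc) = (hetSet a b).filter (· ≤ j.succ) := by
        ext u
        simp only [Finset.mem_filter, mem_hetSet]
        constructor
        · rintro ⟨h1, h2⟩
          refine ⟨h1, ?_⟩
          rw [Fin.le_def] at *
          simp only [Fin.coe_castSucc] at h2
          simp only [Fin.val_succ]
          omega
        · rintro ⟨h1, h2⟩
          refine ⟨h1, ?_⟩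
          have hne : u ≠ j.succ := fun he => h1 (he ▸ hs)
          have hne' : u.val ≠ j.succ.val := fun he => hne (Fin.ext he)
          rw [Fin.le_def] at *
          simp only [Fin.val_succ] at h2 hne'
          simp only [Fin.coe_castSucc]
          omega
      unfold sigmaStar
      rw [hfilter]
    · by_cases hprev : ((hetSet a b).filter (· ≤ j.castSucc)).Nonempty
      · set p := ((hetSet a b).filter (· ≤ j.castSucc)).max' hprev with hpdef
        have hpmem := Finset.max'_mem ((hetSet a b).filter (· ≤ j.castSucc)) hprev
        rw [← hpdef] at hpmem
        simp only [Finset.mem_filter, mem_hetSet] at hpmem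
        obtain ⟨hphet, hple⟩ := hpmem
        have hplt : p < j.succ := by
          rw [Fin.le_def] at hple
          rw [Fin.lt_def]
          simp only [Fin.coe_castSucc] at hple
          simp only [Fin.val_succ]
          omega
        have hbet : ∀ u, p < u → u < j.succ → a u = b u := by
          intro u h1 h2
          by_contra hu
          have humem : u ∈ (hetSet a b).filter (· ≤ j.castSucc) := by
            simp only [Finset.mem_filter, mem_hetSet]
            refine ⟨hu, ?_⟩
            rw [Fin.lt_def] at h2
            rw [Fin.le_def]
            simp only [Fin.val_succ] at h2
            simp only [Fin.coe_castSucc]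
            omega
          have := Finset.le_max' _ u humem
          rw [← hpdef] at this
          exact absurd h1 (not_lt.mpr this)
        have hcast : sigmaStar a b c j.castSucc = forcedOr a c p := by
          unfold sigmaStar
          rw [dif_pos hprev]
        have hxor : ¬((c p ≠ c j.succ) ↔ (a p ≠ a j.succ)) := by
          apply (forced_ne_iff hc hphet hs).mp
          rw [← hcast, ← sigmaStar_het hs]
          exact hj
        refine ⟨(p, j.succ), mem_pairSet.mpr ⟨hplt, hphet, hs, hbet, hxor⟩, ?_⟩
        apply Fin.ext
        simp only [Fin.val_succ]
        omega
      · exfalso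
        apply hj
        have hsmem : j.succ ∈ hetSet a b := mem_hetSet.mpr hs
        have hHne : (hetSet a b).Nonempty := ⟨j.succ, hsmem⟩
        have hmin : (hetSet a b).min' hHne = j.succ := by
          apply le_antisymm
          · exact Finset.min'_le _ _ hsmem
          · apply Finset.le_min'
            intro u hu
            by_contra hlt
            push_neg at hlt
            apply hprev
            refine ⟨u, ?_⟩
            simp only [Finset.mem_filter]
            refine ⟨hu, ?_⟩
            rw [Fin.lt_def] at hlt
            rw [Fin.le_def]
            simp only [Fin.val_succ] at hlt
            simp only [Fin.coe_castSucc]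
            omega
        have h1 : sigmaStar a b c j.castSucc = forcedOr a c j.succ := by
          unfold sigmaStar
          rw [dif_neg hprev, dif_pos hHne, hmin]
        rw [h1, sigmaStar_het hs]

end Stmt13Aux

open Stmt13Aux in
/-- the minimum number of recombinations needed to inherit `c` from `(a, b)`
equals the number of pairs of consecutive heterozygous sites of the parent on which the
alternation pattern of `c` differs (XOR) from that of `a`. -/
theorem stmt13 (n : ℕ) (a b c : Fin (n + 1) → Bool)
    (hc : ∀ s, c s = a s ∨ c s = b s) :
    sInf {k | ∃ σ : Fin (n + 1) → Fin 2, IsValidOrigin a b c σ ∧ nRecomb σ = k} =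
      (Finset.univ.filter fun pq : Fin (n + 1) × Fin (n + 1) =>
        pq.1 < pq.2 ∧ a pq.1 ≠ b pq.1 ∧ a pq.2 ≠ b pq.2 ∧
        (∀ u, pq.1 < u → u < pq.2 → a u = b u) ∧
        ¬((c pq.1 ≠ c pq.2) ↔ (a pq.1 ≠ a pq.2))).card := by
  classical
  have hPfix : (Finset.univ.filter fun pq : Fin (n + 1) × Fin (n + 1) =>
      pq.1 < pq.2 ∧ a pq.1 ≠ b pq.1 ∧ a pq.2 ≠ b pq.2 ∧
      (∀ u, pq.1 < u → u < pq.2 → a u = b u) ∧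
      ¬((c pq.1 ≠ c pq.2) ↔ (a pq.1 ≠ a pq.2))).card = (pairSet a b c).card := by
    congr 1
  rw [hPfix]
  apply le_antisymm
  · apply Nat.sInf_le
    exact ⟨sigmaStar a b c, sigmaStar_valid hc, (upper_count hc).symm⟩
  · have hne : {k | ∃ σ : Fin (n + 1) → Fin 2, IsValidOrigin a b c σ ∧ nRecomb σ = k}.Nonempty :=
      ⟨nRecomb (sigmaStar a b c), sigmaStar a b c, sigmaStar_valid hc, rfl⟩
    apply le_csInf hne
    rintro k ⟨σ, hv, rfl⟩
    exact lower_bound hc hv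
end

section
/- Let G be a finite graph with vertex set V, let F ⊆ V × Bool be a set of 'forced color' constraints, and build G' by adding two new vertices v_r, v_b joined by an edge, and, for each (v, red) ∈ F, an edge {v, v_b}, and for each (v, blue) ∈ F, an edge {v, v_r} (all edges negative, i.e., an edge disagrees when its endpoints get the same color). Then for every k: G admits a 2-coloring with at most k disagreeing edges that additionally assigns every forced vertex its forced color, if and only if G' admits a 2-coloring with at most k disagreeing edges none of which is one of the newly added edges. -/
/-- the forced-color gadget.  `G` is an all-negative graph (edge set `E` with
endpoint map `ends`; an edge disagrees with a 2-coloring when its endpoints get the same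
color), and `F` is a set of forced-color constraints (red = `true`, blue = `false`).
The gadget graph `G'` adds two vertices `v_r = Sum.inr true` and `v_b = Sum.inr false`
joined by an edge, an edge `{v, v_b}` for each `(v, red) ∈ F` and an edge `{v, v_r}` for
each `(v, blue) ∈ F`.  Then `G` has a 2-coloring with at most `k` disagreeing edges
respecting all forced colors iff `G'` has a 2-coloring with at most `k` disagreeing edges
none of which is a newly added edge. -/
theorem stmt14 (V E : Type) [Fintype V] [Fintype E] [DecidableEq V] [DecidableEq E]
    (ends : E → V × V) (F : Finset (V × Bool)) (k : ℕ) :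
    (∃ φ : V → Bool,
        (Finset.univ.filter fun e : E => φ (ends e).1 = φ (ends e).2).card ≤ k ∧
        ∀ p ∈ F, φ p.1 = p.2) ↔
      (∃ ψ : V ⊕ Bool → Bool,
        (Finset.univ.filter fun e : E =>
            ψ (Sum.inl (ends e).1) = ψ (Sum.inl (ends e).2)).card ≤ k ∧
        ψ (Sum.inr true) ≠ ψ (Sum.inr false) ∧
        ∀ p ∈ F, ψ (Sum.inl p.1) ≠ ψ (Sum.inr (!p.2))) := by
  constructor
  · rintro ⟨φ, hk, hF⟩
    refine ⟨Sum.elim φ id, hk, by simp, ?_⟩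
    intro p hp
    simp [hF p hp]
  · rintro ⟨ψ, hk, hrb, hF⟩
    refine ⟨fun v => ψ (Sum.inl v) == ψ (Sum.inr true), ?_, ?_⟩
    · refine le_trans (le_of_eq (congrArg Finset.card ?_)) hk
      apply Finset.filter_congr
      intro e _
      constructor
      · intro h
        cases hb : ψ (Sum.inl (ends e).1) <;> cases hb' : ψ (Sum.inl (ends e).2) <;>
          simp_all
      · intro h; simp [h]
    · intro p hp
      have h := hF p hp
      cases hp2 : p.2 <;> rw [hp2] at h <;> simp at h <;>
        cases hb : ψ (Sum.inl p.1) <;> cases ht : ψ (Sum.inr true) <;>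
          cases hf : ψ (Sum.inr false) <;> simp_all
end
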